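/- Every complex zero z of the polynomial P_m(z) = P_m^{(m+1/2, -m-1/2)}(z) satisfies |z + 1| < 1. -/

import Mathlib

open Finset

/-- Generalized binomial coefficient over ℂ: `binom(u, j) = u(u-1)⋯(u-j+1)/j!`. -/
noncomputable def gbinomC (u : ℂ) (j : ℕ) : ℂ :=
  (∏ i ∈ Finset.range j, (u - i)) / (Nat.factorial j)

/-- Jacobi polynomial via the explicit sum formula, viewed over ℂ
(with real parameters α, β). -/
noncomputable def jacobiC (n : ℕ) (α β : ℝ) (z : ℂ) : ℂ :=
  ((2:ℂ)^n)⁻¹ * ∑ k ∈ Finset.range (n+1),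
    gbinomC ((n:ℂ) + (α:ℂ)) (n - k) * gbinomC ((n:ℂ) + (β:ℂ)) k *
      (z - 1)^k * (z + 1)^(n - k)

namespace ZD


noncomputable def pd (u : ℂ) (n : ℕ) : ℂ := ∏ i ∈ Finset.range n, (u - i)

lemma gbinomC_eq (u : ℂ) (n : ℕ) : gbinomC u n = pd u n / (Nat.factorial n : ℂ) := rfl

lemma pd_zero (u : ℂ) : pd u 0 = 1 := by simp [pd]

lemma pd_succ (u : ℂ) (n : ℕ) : pd u (n+1) = pd u n * (u - n) := Finset.prod_range_succ _ _

lemma pd_add (u : ℂ) (a b : ℕ) : pd u (a+b) = pd u a * pd (u - a) b := by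
  rw [pd, Finset.prod_range_add]
  congr 1
  apply Finset.prod_congr rfl
  intro i _
  push_cast
  ring

lemma pd_vandermonde (n : ℕ) : ∀ u v : ℂ,
    pd (u+v) n = ∑ i ∈ range (n+1), (n.choose i : ℂ) * pd u i * pd v (n - i) := by
  induction n with
  | zero => intro u v; simp [pd]
  | succ n ih =>
    intro u v
    rw [pd_succ, ih u v, Finset.sum_mul]
    have step : ∀ i ∈ range (n+1),
        (n.choose i : ℂ) * pd u i * pd v (n - i) * (u + v - n)
        = (n.choose i : ℂ) * pd u (i+1) * pd v (n-i)
          + (n.choose i : ℂ) * pd u i * pd v ((n-i)+1) := by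
      intro i hi
      have hi' : i ≤ n := by simpa [Nat.lt_succ_iff] using hi
      have hcast : ((n : ℂ)) = (i : ℂ) + ((n - i : ℕ) : ℂ) := by
        rw [← Nat.cast_add]
        congr 1
        omega
      rw [pd_succ u i, pd_succ v (n-i), hcast]
      ring
    rw [Finset.sum_congr rfl step, Finset.sum_add_distrib]
    -- now: Σ_{i∈range(n+1)} C(n,i) pd u (i+1) pd v (n-i) + Σ_{i∈range(n+1)} C(n,i) pd u i pd v (n-i+1)
    -- target: Σ_{i∈range(n+2)} C(n+1,i) pd u i pd v (n+1-i)
    have e2 : ∀ i ∈ range (n+1), (n.choose i : ℂ) * pd u i * pd v ((n-i)+1)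
        = (n.choose i : ℂ) * pd u i * pd v ((n+1)-i) := by
      intro i hi
      have hi' : i ≤ n := by simpa [Nat.lt_succ_iff] using hi
      congr 2
      omega
    rw [Finset.sum_congr rfl e2]
    rw [show (∑ i ∈ range (n+2), ((n+1).choose i : ℂ) * pd u i * pd v ((n+1) - i))
        = ∑ i ∈ range (n+1), (((n+1).choose (i+1) : ℂ)) * pd u (i+1) * pd v ((n+1)-(i+1))
          + ((n+1).choose 0 : ℂ) * pd u 0 * pd v (n+1) from Finset.sum_range_succ' _ _]
    have e3 : ∀ i ∈ range (n+1), (((n+1).choose (i+1) : ℂ)) * pd u (i+1) * pd v ((n+1)-(i+1))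
        = (n.choose i : ℂ) * pd u (i+1) * pd v (n-i)
          + (n.choose (i+1) : ℂ) * pd u (i+1) * pd v (n-i) := by
      intro i hi
      have : (n+1).choose (i+1) = n.choose i + n.choose (i+1) := Nat.choose_succ_succ' n i
      rw [this]
      have : (n+1) - (i+1) = n - i := by omega
      rw [this]
      push_cast
      ring
    rw [Finset.sum_congr rfl e3, Finset.sum_add_distrib]
    -- remaining: match second pieces
    have e4 : ∑ i ∈ range (n+1), (n.choose (i+1) : ℂ) * pd u (i+1) * pd v (n-i)
          + ((n+1).choose 0 : ℂ) * pd u 0 * pd v (n+1)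
        = ∑ i ∈ range (n+1), (n.choose i : ℂ) * pd u i * pd v ((n+1)-i) := by
      rw [show (∑ i ∈ range (n+1), (n.choose i : ℂ) * pd u i * pd v ((n+1) - i))
          = ∑ i ∈ range n, ((n.choose (i+1) : ℂ)) * pd u (i+1) * pd v ((n+1)-(i+1))
            + (n.choose 0 : ℂ) * pd u 0 * pd v (n+1) from Finset.sum_range_succ' _ _]
      rw [Finset.sum_range_succ]
      simp only [Nat.choose_succ_self, Nat.cast_zero, zero_mul, add_zero, Nat.choose_zero_right,
        Nat.cast_one]
      congr 1
      apply Finset.sum_congr rfl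
      intro i hi
      congr 2
      omega
    rw [← e4]
    ring



lemma fact_ne (n : ℕ) : (Nat.factorial n : ℂ) ≠ 0 := by
  exact_mod_cast Nat.factorial_ne_zero n

lemma gbinom_vandermonde (n : ℕ) (u v : ℂ) :
    ∑ i ∈ range (n+1), gbinomC u i * gbinomC v (n-i) = gbinomC (u+v) n := by
  rw [gbinomC_eq, pd_vandermonde n u v, Finset.sum_div]
  apply Finset.sum_congr rfl
  intro i hi
  have hi' : i ≤ n := by simpa [Nat.lt_succ_iff] using hi
  rw [gbinomC_eq, gbinomC_eq]
  have h := Nat.choose_mul_factorial_mul_factorial hi'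
  have hc : (n.choose i : ℂ) * (Nat.factorial i : ℂ) * (Nat.factorial (n-i) : ℂ)
      = (Nat.factorial n : ℂ) := by exact_mod_cast congrArg (Nat.cast (R := ℂ)) h
  rw [div_mul_div_comm, div_eq_div_iff (mul_ne_zero (fact_ne i) (fact_ne (n-i))) (fact_ne n)]
  linear_combination (-(pd u i * pd v (n-i))) * hc

lemma gbinom_mul_choose (B : ℂ) (d i : ℕ) :
    gbinomC B (d+i) * ((d+i).choose d : ℂ) = gbinomC B d * gbinomC (B - d) i := by
  rw [gbinomC_eq, gbinomC_eq, gbinomC_eq, pd_add]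
  have h := Nat.add_choose_mul_factorial_mul_factorial i d
  rw [add_comm i d] at h
  have hc : ((d+i).choose d : ℂ) * (Nat.factorial i : ℂ) * (Nat.factorial d : ℂ)
      = (Nat.factorial (d+i) : ℂ) := by exact_mod_cast congrArg (Nat.cast (R := ℂ)) h
  rw [div_mul_eq_mul_div, div_mul_div_comm,
    div_eq_div_iff (fact_ne (d+i)) (mul_ne_zero (fact_ne d) (fact_ne i))]
  linear_combination pd B d * pd (B - d) i * hc

lemma pd_natCast (n : ℕ) : ∀ k : ℕ, k ≤ n → pd (n : ℂ) k = (n.descFactorial k : ℂ) := by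
  intro k
  induction k with
  | zero => intro _; simp [pd]
  | succ k ih =>
    intro h
    have hk : k ≤ n := by omega
    rw [pd_succ, ih hk, Nat.descFactorial_succ]
    have : ((n - k : ℕ) : ℂ) = (n : ℂ) - (k : ℂ) := by
      push_cast [Nat.cast_sub hk]; ring
    rw [Nat.cast_mul, this]
    ring

lemma gbinom_natCast (n k : ℕ) (h : k ≤ n) : gbinomC (n : ℂ) k = (n.choose k : ℂ) := by
  rw [gbinomC_eq, pd_natCast n k h, Nat.descFactorial_eq_factorial_mul_choose]
  rw [Nat.cast_mul, mul_comm, mul_div_assoc]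
  rw [div_self (fact_ne k), mul_one]

lemma gbinomC_succ (u : ℂ) (d : ℕ) :
    gbinomC u (d+1) = gbinomC u d * (u - d) / (d+1) := by
  rw [gbinomC_eq, gbinomC_eq, pd_succ, Nat.factorial_succ]
  push_cast
  rw [div_mul_eq_mul_div, div_div]
  congr 1
  ring

lemma beta_eq (d : ℕ) :
    (-2 : ℂ)^d * gbinomC (-(1/2)) d = (((2*d).choose d : ℕ) : ℂ) / 2^d := by
  induction d with
  | zero => simp [gbinomC]
  | succ d ih =>
    have hc := Nat.succ_mul_centralBinom_succ d
    simp only [Nat.centralBinom] at hc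
    have hc' : ((d:ℂ)+1) * (((2*(d+1)).choose (d+1) : ℕ) : ℂ)
        = 2*(2*(d:ℂ)+1) * (((2*d).choose d : ℕ) : ℂ) := by exact_mod_cast hc
    have h2p : (2:ℂ)^d ≠ 0 := pow_ne_zero _ two_ne_zero
    have ihm : (-2:ℂ)^d * gbinomC (-(1/2)) d * 2^d = (((2*d).choose d : ℕ) : ℂ) := by
      rw [ih, div_mul_cancel₀ _ h2p]
    have h2 : ((d:ℂ)+1) ≠ 0 := Nat.cast_add_one_ne_zero d
    rw [gbinomC_succ, pow_succ, pow_succ, ← mul_div_assoc,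
      div_eq_div_iff h2 (mul_ne_zero h2p two_ne_zero)]
    push_cast
    linear_combination 2*(2*(d:ℂ)+1) * ihm - hc'


lemma expand_term (m k : ℕ) (hk : k ≤ m) (y : ℂ) :
    (y - 2)^k * y^(m-k) = ∑ j ∈ range (m+1), (k.choose (m-j) : ℂ) * (-2)^(m-j) * y^j := by
  rw [range_eq_Ico, ← Finset.sum_Ico_consecutive _ (Nat.zero_le (m-k)) (by omega : m-k ≤ m+1)]
  have h1 : ∑ j ∈ Finset.Ico 0 (m-k), (k.choose (m-j) : ℂ) * (-2)^(m-j) * y^j = 0 := by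
    apply Finset.sum_eq_zero
    intro j hj
    simp only [Finset.mem_Ico] at hj
    rw [Nat.choose_eq_zero_of_lt (by omega : k < m - j)]
    simp
  rw [h1, zero_add, Finset.sum_Ico_eq_sum_range]
  rw [show m + 1 - (m - k) = k + 1 by omega]
  have h2 : ∀ r ∈ range (k+1),
      (k.choose (m - (m-k+r)) : ℂ) * (-2)^(m-(m-k+r)) * y^(m-k+r)
      = (y^r * (-2)^(k-r) * (k.choose r : ℂ)) * y^(m-k) := by
    intro r hr
    have hr' : r ≤ k := by simpa [Nat.lt_succ_iff] using hr
    rw [show m - (m-k+r) = k - r by omega, Nat.choose_symm hr', pow_add]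
    ring
  rw [Finset.sum_congr rfl h2, ← Finset.sum_mul, ← add_pow]
  rw [show y + -2 = y - 2 by ring]

lemma key_sum (m d : ℕ) (hd : d ≤ m) (A B : ℂ) :
    ∑ k ∈ range (m+1), gbinomC A (m-k) * gbinomC B k * (k.choose d : ℂ)
      = gbinomC B d * gbinomC (A + B - d) (m - d) := by
  rw [range_eq_Ico, ← Finset.sum_Ico_consecutive _ (Nat.zero_le d) (by omega : d ≤ m+1)]
  have h1 : ∑ k ∈ Finset.Ico 0 d, gbinomC A (m-k) * gbinomC B k * (k.choose d : ℂ) = 0 := by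
    apply Finset.sum_eq_zero
    intro k hk
    simp only [Finset.mem_Ico] at hk
    rw [Nat.choose_eq_zero_of_lt (by omega : k < d)]
    simp
  rw [h1, zero_add, Finset.sum_Ico_eq_sum_range]
  rw [show m + 1 - d = (m - d) + 1 by omega]
  have h2 : ∀ i ∈ range ((m-d)+1),
      gbinomC A (m-(d+i)) * gbinomC B (d+i) * ((d+i).choose d : ℂ)
      = gbinomC B d * (gbinomC (B - d) i * gbinomC A ((m-d) - i)) := by
    intro i hi
    have hi' : i ≤ m - d := by simpa [Nat.lt_succ_iff] using hi
    rw [show m - (d+i) = (m-d) - i by omega]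
    calc gbinomC A ((m-d)-i) * gbinomC B (d+i) * ((d+i).choose d : ℂ)
        = gbinomC A ((m-d)-i) * (gbinomC B (d+i) * ((d+i).choose d : ℂ)) := by ring
      _ = gbinomC A ((m-d)-i) * (gbinomC B d * gbinomC (B-(d:ℂ)) i) := by
          rw [gbinom_mul_choose]
      _ = gbinomC B d * (gbinomC (B - (d:ℂ)) i * gbinomC A ((m-d) - i)) := by ring
  rw [Finset.sum_congr rfl h2, ← Finset.mul_sum, gbinom_vandermonde (m-d) (B-d) A]
  rw [show B - (d:ℂ) + A = A + B - d by ring]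

lemma repr_general (m : ℕ) (z : ℂ) :
    ∑ k ∈ range (m+1), gbinomC (2*(m:ℂ)+1/2) (m-k) * gbinomC (-(1/2)) k
        * (z-1)^k * (z+1)^(m-k)
    = ∑ j ∈ range (m+1),
        ((((2*(m-j)).choose (m-j) : ℕ) : ℂ) / 2^(m-j) * (((m+j).choose j : ℕ) : ℂ))
          * (z+1)^j := by
  have step1 : ∀ k ∈ range (m+1),
      gbinomC (2*(m:ℂ)+1/2) (m-k) * gbinomC (-(1/2)) k * (z-1)^k * (z+1)^(m-k)
      = ∑ j ∈ range (m+1), gbinomC (2*(m:ℂ)+1/2) (m-k) * gbinomC (-(1/2)) k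
          * ((k.choose (m-j) : ℂ) * (-2)^(m-j)) * (z+1)^j := by
    intro k hk
    have hk' : k ≤ m := by simpa [Nat.lt_succ_iff] using hk
    rw [mul_assoc, show (z - 1) = ((z+1) - 2) by ring, expand_term m k hk' (z+1),
      Finset.mul_sum]
    apply Finset.sum_congr rfl
    intro j _
    ring
  rw [Finset.sum_congr rfl step1, Finset.sum_comm]
  apply Finset.sum_congr rfl
  intro j hj
  have hj' : j ≤ m := by simpa [Nat.lt_succ_iff] using hj
  have pull : ∀ k ∈ range (m+1),
      gbinomC (2*(m:ℂ)+1/2) (m-k) * gbinomC (-(1/2)) k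
        * ((k.choose (m-j) : ℂ) * (-2)^(m-j)) * (z+1)^j
      = ((-2:ℂ)^(m-j) * (z+1)^j)
          * (gbinomC (2*(m:ℂ)+1/2) (m-k) * gbinomC (-(1/2)) k * (k.choose (m-j) : ℂ)) := by
    intro k _
    ring
  rw [Finset.sum_congr rfl pull, ← Finset.mul_sum,
    key_sum m (m-j) (by omega) (2*(m:ℂ)+1/2) (-(1/2))]
  rw [show m - (m - j) = j by omega]
  rw [show 2*(m:ℂ)+1/2 + -(1/2) - ((m - j : ℕ) : ℂ) = ((m + j : ℕ) : ℂ) by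
    push_cast [Nat.cast_sub hj']; ring]
  rw [gbinom_natCast (m+j) j (by omega)]
  have hb := beta_eq (m-j)
  calc ((-2:ℂ)^(m-j) * (z+1)^j) * (gbinomC (-(1/2)) (m-j) * (((m+j).choose j : ℕ) : ℂ))
      = ((-2:ℂ)^(m-j) * gbinomC (-(1/2)) (m-j)) * (((m+j).choose j : ℕ) : ℂ) * (z+1)^j := by
        ring
    _ = _ := by rw [hb]




lemma EK (m : ℕ) (hm : 1 ≤ m) (A : ℕ → ℝ) (hpos : ∀ j, 0 < A j)
    (hmono : ∀ j, j < m → A j < A (j+1)) (y : ℂ)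
    (heq : ∑ j ∈ range (m+1), (A j : ℂ) * y^j = 0) :
    ‖y‖ < 1 := by
  by_contra hy
  push_neg at hy
  have h0' : ∑ j ∈ range (m+1), (A j : ℂ) * y^(j+1) = 0 := by
    have h0 : y * ∑ j ∈ range (m+1), (A j : ℂ) * y^j = 0 := by rw [heq, mul_zero]
    rw [Finset.mul_sum] at h0
    rw [← h0]
    apply Finset.sum_congr rfl
    intros
    ring
  rw [Finset.sum_range_succ] at h0'
  have h2 := heq
  rw [Finset.sum_range_succ'] at h2
  have hsum : ∑ j ∈ range m, ((A (j+1) - A j : ℝ) : ℂ) * y^(j+1)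
      = ∑ j ∈ range m, (A (j+1) : ℂ) * y^(j+1) - ∑ j ∈ range m, (A j : ℂ) * y^(j+1) := by
    rw [← Finset.sum_sub_distrib]
    apply Finset.sum_congr rfl
    intros
    push_cast
    ring
  have key : (A m : ℂ) * y^(m+1)
      = (A 0 : ℂ) + ∑ j ∈ range m, ((A (j+1) - A j : ℝ) : ℂ) * y^(j+1) := by
    rw [hsum]
    simp only [pow_zero, mul_one] at h2
    linear_combination h0' - h2
  set r := ‖y‖ with hr
  have hrpos : 0 < r := lt_of_lt_of_le one_pos hy
  have hrm : (0:ℝ) < r^m := pow_pos hrpos m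
  have hrm1 : (1:ℝ) ≤ r^m := by
    calc (1:ℝ) = 1^m := (one_pow m).symm
    _ ≤ r^m := pow_le_pow_left₀ zero_le_one hy m
  have htel : ∑ j ∈ range m, (A (j+1) - A j) = A m - A 0 := Finset.sum_range_sub A m
  have habs : A m * r^(m+1) ≤ A m * r^m := by
    have e1 : ‖(A m : ℂ) * y^(m+1)‖ = A m * r^(m+1) := by
      rw [norm_mul, norm_pow, Complex.norm_real, Real.norm_eq_abs, abs_of_pos (hpos m)]
    calc A m * r^(m+1) = ‖(A m : ℂ) * y^(m+1)‖ := e1.symm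
      _ = ‖(A 0 : ℂ) + ∑ j ∈ range m, ((A (j+1) - A j : ℝ) : ℂ) * y^(j+1)‖ := by
          rw [key]
      _ ≤ A 0 + ∑ j ∈ range m, (A (j+1) - A j) * r^(j+1) := by
          refine (norm_add_le _ _).trans ?_
          apply add_le_add
          · exact le_of_eq (by rw [Complex.norm_real, Real.norm_eq_abs, abs_of_pos (hpos 0)])
          · refine (norm_sum_le _ _).trans ?_
            refine le_of_eq (Finset.sum_congr rfl ?_)
            intro j hj
            rw [norm_mul, norm_pow, Complex.norm_real, Real.norm_eq_abs,
              abs_of_nonneg (sub_nonneg.mpr (le_of_lt (hmono j (mem_range.mp hj))))]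
      _ ≤ A 0 * r^m + ∑ j ∈ range m, (A (j+1) - A j) * r^m := by
          apply add_le_add
          · nlinarith [hpos 0]
          · apply Finset.sum_le_sum
            intro j hj
            have hj' : j + 1 ≤ m := mem_range.mp hj
            exact mul_le_mul_of_nonneg_left (pow_le_pow_right₀ hy hj')
              (sub_nonneg.mpr (le_of_lt (hmono j (mem_range.mp hj))))
      _ = A m * r^m := by rw [← Finset.sum_mul, htel]; ring
  have hrle : r ≤ 1 := by
    have h3 : (A m * r^m) * r ≤ (A m * r^m) * 1 := by
      calc (A m * r^m) * r = A m * r^(m+1) := by rw [pow_succ]; ring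
      _ ≤ A m * r^m := habs
      _ = (A m * r^m) * 1 := by ring
    exact le_of_mul_le_mul_left h3 (mul_pos (hpos m) hrm)
  have hr1 : r = 1 := le_antisymm hrle hy
  by_cases hy1 : y = 1
  · rw [hy1] at heq
    simp only [one_pow, mul_one] at heq
    have hS : (0:ℝ) < ∑ j ∈ range (m+1), A j :=
      Finset.sum_pos (fun j _ => hpos j) nonempty_range_add_one
    have : ((∑ j ∈ range (m+1), A j : ℝ) : ℂ) = 0 := by push_cast; exact heq
    rw [Complex.ofReal_eq_zero] at this
    linarith
  · -- y ≠ 1 but |y| = 1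
    set cy := (starRingEnd ℂ) y with hcy
    have hyc : y * cy = 1 := by
      rw [hcy, Complex.mul_conj, Complex.normSq_eq_norm_sq, ← hr, hr1]
      norm_num
    have h := congrArg (fun t => t * cy^(m+1)) key
    simp only [add_mul, Finset.sum_mul] at h
    have hL : (A m:ℂ) * y^(m+1) * cy^(m+1) = (A m:ℂ) := by
      rw [mul_assoc, ← mul_pow, hyc, one_pow, mul_one]
    rw [hL] at h
    have h' : (A m : ℂ) = (A 0:ℂ) * cy^(m+1)
        + ∑ j ∈ range m, ((A (j+1) - A j : ℝ):ℂ) * (y^(j+1) * cy^(m+1)) := by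
      rw [h]
      congr 1
      apply Finset.sum_congr rfl
      intros
      ring
    have hre := congrArg Complex.re h'
    rw [Complex.add_re, Complex.re_sum] at hre
    have hre0 : ((A 0:ℂ) * cy^(m+1)).re = A 0 * (cy^(m+1)).re := by
      simp [Complex.mul_re]
    have hrej : ∀ j ∈ range m, (((A (j+1) - A j : ℝ):ℂ) * (y^(j+1) * cy^(m+1))).re
        = (A (j+1) - A j) * (y^(j+1) * cy^(m+1)).re := by
      intro j _
      simp [Complex.mul_re]
    rw [hre0, Finset.sum_congr rfl hrej] at hre
    have hrem : (A m:ℂ).re = A m := Complex.ofReal_re _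
    rw [hrem] at hre
    -- bounds
    have habs_t : ∀ j, ‖y^(j+1) * cy^(m+1)‖ = 1 := by
      intro j
      rw [norm_mul, norm_pow, norm_pow, Complex.norm_conj, ← hr, hr1]
      norm_num
    have hb0 : A 0 * (cy^(m+1)).re ≤ A 0 := by
      have : (cy^(m+1)).re ≤ 1 := by
        refine (Complex.re_le_norm _).trans ?_
        rw [norm_pow, Complex.norm_conj, ← hr, hr1, one_pow]
      nlinarith [hpos 0]
    have hrey : y.re < 1 := by
      rcases lt_or_eq_of_le (by simpa [← hr, hr1] using Complex.re_le_norm y) with h | h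
      · exact h
      · exfalso
        apply hy1
        have hnsq : y.re * y.re + y.im * y.im = 1 := by
          have := Complex.sq_norm y
          rw [← hr, hr1, Complex.normSq_apply] at this
          linarith [this]
        have him : y.im = 0 := by nlinarith [h]
        apply Complex.ext
        · rw [h]; norm_num
        · rw [him]; norm_num
    have hstrict : ∑ j ∈ range m, (A (j+1) - A j) * (y^(j+1) * cy^(m+1)).re
        < ∑ j ∈ range m, (A (j+1) - A j) := by
      apply Finset.sum_lt_sum
      · intro j hj
        have hc : 0 ≤ A (j+1) - A j := sub_nonneg.mpr (le_of_lt (hmono j (mem_range.mp hj)))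
        have : (y^(j+1) * cy^(m+1)).re ≤ 1 := (Complex.re_le_norm _).trans (le_of_eq (habs_t j))
        nlinarith
      · refine ⟨m-1, mem_range.mpr (by omega), ?_⟩
        have hmm : m - 1 + 1 = m := by omega
        have ht : y^(m-1+1) * cy^(m+1) = cy := by
          rw [hmm, pow_succ, ← mul_assoc, ← mul_pow, hyc, one_pow, one_mul]
        rw [ht, hcy, Complex.conj_re]
        have hc : 0 < A (m-1+1) - A (m-1) := sub_pos.mpr (hmono (m-1) (by omega))
        nlinarith
    rw [htel] at hstrict
    linarith


/-- the real coefficient sequence -/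
noncomputable def Aco (m j : ℕ) : ℝ :=
  (((2*(m-j)).choose (m-j) : ℕ) : ℝ) / 2^(m-j) * (((m+j).choose j : ℕ) : ℝ)

lemma Aco_pos (m j : ℕ) : 0 < Aco m j := by
  unfold Aco
  have h1 : 0 < (2*(m-j)).choose (m-j) := Nat.choose_pos (by omega)
  have h2 : 0 < (m+j).choose j := Nat.choose_pos (by omega)
  positivity

lemma Aco_mono (m j : ℕ) (h : j < m) : Aco m j < Aco m (j+1) := by
  obtain ⟨d, hd⟩ : ∃ d, m = j + d + 1 := ⟨m - j - 1, by omega⟩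
  subst hd
  unfold Aco
  rw [show j + d + 1 - j = d + 1 by omega, show j + d + 1 - (j+1) = d by omega,
    show j + d + 1 + j = 2*j + d + 1 by ring, show j + d + 1 + (j+1) = 2*j + d + 2 by ring]
  -- goal : C(2(d+1), d+1)/2^(d+1) * C(2j+d+1, j) < C(2d, d)/2^d * C(2j+d+2, j+1)
  have hA := Nat.succ_mul_centralBinom_succ d
  simp only [Nat.centralBinom] at hA
  have hB := Nat.add_one_mul_choose_eq (2*j+d+1) j
  have hB' : (2*j+d+2) * (2*j+d+1).choose j = (2*j+d+2).choose (j+1) * (j+1) := by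
    simpa [Nat.succ_eq_add_one] using hB
  have hnat : (2*(d+1)).choose (d+1) * (2*j+d+1).choose j
      < 2 * (2*d).choose d * (2*j+d+2).choose (j+1) := by
    have hP : 0 < 2 * ((2*d).choose d) * ((2*j+d+1).choose j) :=
      Nat.mul_pos (Nat.mul_pos (by norm_num) (Nat.choose_pos (by omega)))
        (Nat.choose_pos (by omega))
    have hcore : (j+1) * (2*d+1) < (d+1) * (2*j+d+2) := by nlinarith
    have hfac : 0 < (d+1) * (j+1) := by positivity
    refine Nat.lt_of_mul_lt_mul_left (a := (d+1) * (j+1)) ?_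
    calc (d+1) * (j+1) * ((2*(d+1)).choose (d+1) * (2*j+d+1).choose j)
        = (j+1) * (2*j+d+1).choose j * ((d+1) * (2*(d+1)).choose (d+1)) := by ring
      _ = (j+1) * (2*j+d+1).choose j * (2 * (2*d+1) * (2*d).choose d) := by rw [hA]
      _ = ((j+1) * (2*d+1)) * (2 * ((2*d).choose d) * ((2*j+d+1).choose j)) := by ring
      _ < ((d+1) * (2*j+d+2)) * (2 * ((2*d).choose d) * ((2*j+d+1).choose j)) := by
          exact Nat.mul_lt_mul_of_pos_right hcore hP
      _ = 2 * ((d+1) * (2*d).choose d) * ((2*j+d+2) * (2*j+d+1).choose j) := by ring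
      _ = 2 * ((d+1) * (2*d).choose d) * ((2*j+d+2).choose (j+1) * (j+1)) := by rw [hB']
      _ = (d+1) * (j+1) * (2 * (2*d).choose d * (2*j+d+2).choose (j+1)) := by ring
  -- pass to ℝ
  have h2d : (0:ℝ) < 2^d := by positivity
  rw [div_mul_eq_mul_div, div_mul_eq_mul_div, div_lt_div_iff₀ (by positivity) (by positivity)]
  have hcast : ((((2*(d+1)).choose (d+1) : ℕ) : ℝ) * ((2*j+d+1).choose j : ℕ))
      < 2 * (((2*d).choose d : ℕ) : ℝ) * (((2*j+d+2).choose (j+1) : ℕ) : ℝ) := by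
    exact_mod_cast hnat
  calc (((2*(d+1)).choose (d+1) : ℕ) : ℝ) * ((2*j+d+1).choose j : ℕ) * 2^d
      < 2 * (((2*d).choose d : ℕ) : ℝ) * (((2*j+d+2).choose (j+1) : ℕ) : ℝ) * 2^d := by
        exact mul_lt_mul_of_pos_right hcast h2d
    _ = (((2*d).choose d : ℕ) : ℝ) * (((2*j+d+2).choose (j+1) : ℕ) : ℝ) * 2^(d+1) := by
        rw [pow_succ]; ring


end ZD

open ZD in
/-- Every complex zero of `P_m^{(m+1/2,-m-1/2)}` satisfies `|z+1| < 1`. -/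
theorem zeros_in_disk (m : ℕ) (z : ℂ)
    (hz : jacobiC m ((m:ℝ) + 1/2) (-(m:ℝ) - 1/2) z = 0) :
    ‖z + 1‖ < 1 := by
  rw [jacobiC] at hz
  have h2m : ((2:ℂ)^m)⁻¹ ≠ 0 := by
    apply inv_ne_zero
    exact pow_ne_zero _ two_ne_zero
  have hz0 : ∑ k ∈ Finset.range (m+1),
      gbinomC ((m:ℂ) + (((m:ℝ) + 1/2 : ℝ) : ℂ)) (m - k)
        * gbinomC ((m:ℂ) + ((-(m:ℝ) - 1/2 : ℝ) : ℂ)) k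
        * (z - 1)^k * (z + 1)^(m - k) = 0 := by
    rcases mul_eq_zero.mp hz with h | h
    · exact absurd h h2m
    · exact h
  have hA : ((m:ℂ) + (((m:ℝ) + 1/2 : ℝ) : ℂ)) = 2*(m:ℂ)+1/2 := by push_cast; ring
  have hB : ((m:ℂ) + ((-(m:ℝ) - 1/2 : ℝ) : ℂ)) = -(1/2) := by push_cast; ring
  rw [hA, hB, repr_general m z] at hz0
  rcases Nat.eq_zero_or_pos m with hm0 | hm1
  · exfalso
    subst hm0
    simp [gbinomC] at hz0
  · apply EK m hm1 (Aco m) (Aco_pos m) (Aco_mono m) (z+1)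
    rw [← hz0]
    apply Finset.sum_congr rfl
    intro j _
    unfold Aco
    push_cast
    ring
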